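/- Let F2(X,Y,Z) = (X+Y)^4 + X^2*Y^2 + X*Y*Z*(X+Y+Z) + Z^2*(X+Y+Z)^2, regarded over an algebraic closure K of F_2. Then there is no nonzero vector (x,y,z) in K^3 at which F2 and all three partial derivatives ∂F2/∂X, ∂F2/∂Y, ∂F2/∂Z vanish simultaneously; that is, F2 defines a nonsingular plane quartic curve. -/
import Mathlib


open MvPolynomial

/-- The plane quartic `F2` over the algebraic closure of `𝔽₂`. -/
noncomputable def F2polyBar : MvPolynomial (Fin 3) (AlgebraicClosure (ZMod 2)) :=
  (X 0 + X 1) ^ 4 + (X 0) ^ 2 * (X 1) ^ 2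
    + X 0 * X 1 * X 2 * (X 0 + X 1 + X 2)
    + (X 2) ^ 2 * (X 0 + X 1 + X 2) ^ 2

set_option maxHeartbeats 1000000 in
theorem stmt_13 :
    ¬ ∃ v : Fin 3 → AlgebraicClosure (ZMod 2), v ≠ 0 ∧
      eval v F2polyBar = 0 ∧ ∀ i : Fin 3, eval v (pderiv i F2polyBar) = 0 := by
  rintro ⟨v, hv, hF, hd⟩
  have h2 : (2 : AlgebraicClosure (ZMod 2)) = 0 := by
    exact_mod_cast CharP.cast_eq_zero (AlgebraicClosure (ZMod 2)) 2
  have h0 := hd 0; have h1 := hd 1; have hz2 := hd 2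

  simp [F2polyBar] at h0 h1 hz2 hF
  ring_nf at h0 h1 hz2 hF
  have e0 : v 1 * v 2 * (v 1 + v 2) = 0 := by
    linear_combination h0 - (v 0 * v 1 * v 2 + 7 * v 0 * v 1 ^ 2 + v 0 * v 2 ^ 2
      + 6 * v 0 ^ 2 * v 1 + 2 * v 0 ^ 3 + v 1 * v 2 ^ 2 + 2 * v 1 ^ 3 + v 2 ^ 3) * h2
  have e1 : v 0 * v 2 * (v 0 + v 2) = 0 := by
    linear_combination h1 - (v 0 * v 1 * v 2 + 6 * v 0 * v 1 ^ 2 + v 0 * v 2 ^ 2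
      + 7 * v 0 ^ 2 * v 1 + 2 * v 0 ^ 3 + v 1 * v 2 ^ 2 + 2 * v 1 ^ 3 + v 2 ^ 3) * h2
  have e2 : v 0 * v 1 * (v 0 + v 1) = 0 := by
    linear_combination hz2 - (3 * v 0 * v 1 * v 2 + 3 * v 0 * v 2 ^ 2 + v 0 ^ 2 * v 2
      + 3 * v 1 * v 2 ^ 2 + v 1 ^ 2 * v 2 + 2 * v 2 ^ 3) * h2
  have eF : v 0 ^ 4 + v 1 ^ 4 + v 0 ^ 2 * v 1 ^ 2 + v 0 * v 1 * v 2 ^ 2 + v 0 * v 1 ^ 2 * v 2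
      + v 0 ^ 2 * v 1 * v 2 + v 0 ^ 2 * v 2 ^ 2 + v 1 ^ 2 * v 2 ^ 2 + v 2 ^ 4 = 0 := by
    linear_combination hF - (v 0 * v 1 * v 2 ^ 2 + v 0 * v 1 ^ 3 * 2 + v 0 * v 2 ^ 3
      + 3 * v 0 ^ 2 * v 1 ^ 2 + 2 * v 0 ^ 3 * v 1 + v 1 * v 2 ^ 3) * h2
  have key : v 0 = 0 ∧ v 1 = 0 ∧ v 2 = 0 := by
    have pz : ∀ a : AlgebraicClosure (ZMod 2), a ^ 4 = 0 → a = 0 := fun a h =>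
      pow_eq_zero_iff (n := 4) (by norm_num) |>.mp h
    rcases mul_eq_zero.mp e2 with hA | hB
    · rcases mul_eq_zero.mp hA with hx | hy
      · -- v 0 = 0
        rcases mul_eq_zero.mp e0 with hC | hyz
        · rcases mul_eq_zero.mp hC with hy | hz
          · refine ⟨hx, hy, pz _ ?_⟩
            linear_combination eF - (v 0 ^ 3 + v 0 * v 1 ^ 2 + v 1 * v 2 ^ 2 + v 1 ^ 2 * v 2 + v 0 * v 1 * v 2 + v 0 * v 2 ^ 2) * hx - (v 1 ^ 3 + v 1 * v 2 ^ 2) * hy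
          · have hy : v 1 = 0 := pz _ (by
              linear_combination eF - (v 0 ^ 3 + v 0 * v 1 ^ 2 + v 1 * v 2 ^ 2 + v 1 ^ 2 * v 2 + v 0 * v 1 * v 2 + v 0 * v 2 ^ 2) * hx - (v 2 ^ 3 + v 1 ^ 2 * v 2) * hz)
            exact ⟨hx, hy, hz⟩
        · have hyz' : v 1 = v 2 := by linear_combination hyz - v 2 * h2
          have hz : v 2 = 0 := pz _ (by
            linear_combination eF - (v 0 ^ 3 + v 0 * v 1 ^ 2 + v 1 * v 2 ^ 2 + v 1 ^ 2 * v 2 + v 0 * v 1 * v 2 + v 0 * v 2 ^ 2) * hx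
              - (v 1 ^ 3 + v 1 ^ 2 * v 2 + 2 * v 1 * v 2 ^ 2 + 2 * v 2 ^ 3) * hyz' - v 2 ^ 4 * h2)
          exact ⟨hx, hyz'.trans hz, hz⟩
      · -- v 1 = 0, symmetric using e1
        rcases mul_eq_zero.mp e1 with hC | hxz
        · rcases mul_eq_zero.mp hC with hx | hz
          · refine ⟨hx, hy, pz _ ?_⟩
            linear_combination eF - (v 1 ^ 3 + v 0 ^ 2 * v 1 + v 0 * v 2 ^ 2 + v 0 ^ 2 * v 2 + v 0 * v 1 * v 2 + v 1 * v 2 ^ 2) * hy - (v 0 ^ 3 + v 0 * v 2 ^ 2) * hx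
          · have hx : v 0 = 0 := pz _ (by
              linear_combination eF - (v 1 ^ 3 + v 0 ^ 2 * v 1 + v 0 * v 2 ^ 2 + v 0 ^ 2 * v 2 + v 0 * v 1 * v 2 + v 1 * v 2 ^ 2) * hy - (v 2 ^ 3 + v 0 ^ 2 * v 2) * hz)
            exact ⟨hx, hy, hz⟩
        · have hxz' : v 0 = v 2 := by linear_combination hxz - v 2 * h2
          have hz : v 2 = 0 := pz _ (by
            linear_combination eF - (v 1 ^ 3 + v 0 ^ 2 * v 1 + v 0 * v 2 ^ 2 + v 0 ^ 2 * v 2 + v 0 * v 1 * v 2 + v 1 * v 2 ^ 2) * hy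
              - (v 0 ^ 3 + v 0 ^ 2 * v 2 + 2 * v 0 * v 2 ^ 2 + 2 * v 2 ^ 3) * hxz' - v 2 ^ 4 * h2)
          exact ⟨hxz'.trans hz, hy, hz⟩
    · -- v 0 + v 1 = 0, so v 1 = v 0
      have hyx : v 1 = v 0 := by linear_combination hB - v 0 * h2
      rcases mul_eq_zero.mp e1 with hC | hxz
      · rcases mul_eq_zero.mp hC with hx | hz
        · refine ⟨hx, hyx.trans hx, pz _ ?_⟩
          rw [hyx, hx] at eF; linear_combination eF
        · have hx : v 0 = 0 := pz _ (by
            rw [hyx, hz] at eF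
            linear_combination eF - v 0 ^ 4 * h2)
          exact ⟨hx, hyx.trans hx, hz⟩
      · have hzx : v 2 = v 0 := by linear_combination hxz - v 0 * h2
        have hx : v 0 = 0 := pz _ (by
          rw [hyx, hzx] at eF
          linear_combination eF - 4 * v 0 ^ 4 * h2)
        exact ⟨hx, hyx.trans hx, hzx.trans hx⟩
  exact hv (funext fun i => by fin_cases i <;> simp [key.1, key.2.1, key.2.2])
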